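/- Let w : [0, ρ₀] → ℝ be a C² solution of ẅ = w(w²-1)/R² + (1/2)ẇγ on (0, ρ₀), with R(ρ) > 0 on (0, ρ₀), satisfying w(0) = 1, w(ρ₀) = ±1 (boundary limits). Then |w(ρ)| ≤ 1 for all ρ ∈ (0, ρ₀). -/

import Mathlib

open Set

/-- If `w' c = 0` and `w'` has positive derivative at an interior point `c`,
then `w` takes a value larger than `w c` somewhere in `Ioo 0 ρ₀`. -/
lemma aux_not_max (ρ₀ : ℝ) (w w' : ℝ → ℝ) (c : ℝ) (hc : c ∈ Ioo 0 ρ₀)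
    (hwcont : ContinuousOn w (Icc 0 ρ₀))
    (hw' : ∀ ρ ∈ Ioo 0 ρ₀, HasDerivAt w (w' ρ) ρ)
    (k : ℝ) (hk : 0 < k) (hd : HasDerivAt w' k c) (h0 : w' c = 0) :
    ∃ x ∈ Ioo 0 ρ₀, w c < w x := by
  have hslope : Filter.Tendsto (slope w' c) (nhdsWithin c (Iio c)) (nhds k) :=
    ((hasDerivAt_iff_tendsto_slope.mp hd).mono_left
      (nhdsWithin_mono c (fun x hx => (ne_of_lt hx : x ≠ c))))
  have hev : ∀ᶠ x in nhdsWithin c (Iio c), 0 < slope w' c x :=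
    hslope.eventually (eventually_gt_nhds hk)
  rw [Filter.Eventually, mem_nhdsLT_iff_exists_Ioo_subset] at hev
  obtain ⟨a, ha, hsub⟩ := hev
  have hneg : ∀ x ∈ Ioo a c, w' x < 0 := by
    intro x hx
    have hs := hsub hx
    simp only [mem_setOf_eq, slope_def_field] at hs
    rw [h0, sub_zero] at hs
    rcases div_pos_iff.mp hs with ⟨_, h2⟩ | ⟨h1, _⟩
    · linarith [hx.2]
    · exact h1
  set b := max a (c / 2) with hb
  have hc0 : 0 < c := hc.1
  have hbc : b < c := max_lt ha (by linarith)
  have hbpos : 0 < b := lt_of_lt_of_le (by linarith : (0:ℝ) < c / 2) (le_max_right _ _)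
  have hbρ₀ : b < ρ₀ := hbc.trans hc.2
  have hIccsub : Icc b c ⊆ Icc 0 ρ₀ := Icc_subset_Icc hbpos.le hc.2.le
  have hIoosub : Ioo b c ⊆ Ioo 0 ρ₀ := fun x hx =>
    ⟨hbpos.trans hx.1, hx.2.trans hc.2⟩
  have hanti : StrictAntiOn w (Icc b c) := by
    apply strictAntiOn_of_deriv_neg (convex_Icc b c) (hwcont.mono hIccsub)
    intro x hx
    rw [interior_Icc] at hx
    have hx' : x ∈ Ioo 0 ρ₀ := hIoosub hx
    rw [(hw' x hx').deriv]
    exact hneg x ⟨lt_of_le_of_lt (le_max_left _ _) hx.1, hx.2⟩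
  refine ⟨b, ⟨hbpos, hbρ₀⟩, ?_⟩
  exact hanti (left_mem_Icc.mpr hbc.le) (right_mem_Icc.mpr hbc.le) hbc

theorem stmt_5 (ρ₀ : ℝ) (hρ₀ : 0 < ρ₀)
    (R γ w w' w'' : ℝ → ℝ)
    (hRcont : ContinuousOn R (Ioo 0 ρ₀)) (hγcont : ContinuousOn γ (Ioo 0 ρ₀))
    (hRpos : ∀ ρ ∈ Ioo 0 ρ₀, 0 < R ρ)
    (hwcont : ContinuousOn w (Icc 0 ρ₀))
    (hw' : ∀ ρ ∈ Ioo 0 ρ₀, HasDerivAt w (w' ρ) ρ)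
    (hw'' : ∀ ρ ∈ Ioo 0 ρ₀, HasDerivAt w' (w'' ρ) ρ)
    (heq : ∀ ρ ∈ Ioo 0 ρ₀,
      w'' ρ = w ρ * ((w ρ) ^ 2 - 1) / (R ρ) ^ 2 + (1/2) * w' ρ * γ ρ)
    (hw0 : w 0 = 1) (hwρ₀ : w ρ₀ = 1 ∨ w ρ₀ = -1) :
    ∀ ρ ∈ Ioo 0 ρ₀, |w ρ| ≤ 1 := by
  intro ρ hρ
  by_contra hgt
  push_neg at hgt
  obtain ⟨c, hcmem, hcmax⟩ :=
    isCompact_Icc.exists_isMaxOn (s := Icc 0 ρ₀) (f := fun x => |w x|)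
      ⟨0, by constructor <;> linarith⟩ hwcont.abs
  have hρIcc : ρ ∈ Icc 0 ρ₀ := ⟨hρ.1.le, hρ.2.le⟩
  have hM : 1 < |w c| := lt_of_lt_of_le hgt (hcmax hρIcc)
  have hc0 : c ≠ 0 := by
    intro h; rw [h, hw0] at hM; norm_num at hM
  have hcρ₀ : c ≠ ρ₀ := by
    intro h; rw [h] at hM
    rcases hwρ₀ with h' | h' <;> rw [h'] at hM <;> norm_num at hM
  have hcIoo : c ∈ Ioo 0 ρ₀ :=
    ⟨lt_of_le_of_ne hcmem.1 (Ne.symm hc0), lt_of_le_of_ne hcmem.2 hcρ₀⟩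
  have hRc := hRpos c hcIoo
  rcases lt_trichotomy (w c) 0 with hwc | hwc | hwc
  · -- w c < -1 : interior minimum of w
    have habs : |w c| = -(w c) := abs_of_neg hwc
    have hwc1 : w c < -1 := by rw [habs] at hM; linarith
    have hminw : ∀ x ∈ Icc 0 ρ₀, w c ≤ w x := by
      intro x hx
      have h := hcmax hx
      simp only [mem_setOf_eq] at h
      rw [habs] at h
      have := neg_abs_le (w x)
      linarith
    have hmax : IsMaxOn (fun x => -(w x)) (Icc 0 ρ₀) c := by
      intro x hx
      simpa using neg_le_neg (hminw x hx)
    have hloc : IsLocalMax (fun x => -(w x)) c :=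
      hmax.isLocalMax (Icc_mem_nhds hcIoo.1 hcIoo.2)
    have hd0 : -(w' c) = 0 := hloc.hasDerivAt_eq_zero (hw' c hcIoo).neg
    have hw'c : w' c = 0 := by linarith
    have hw''neg : w'' c < 0 := by
      rw [heq c hcIoo, hw'c]
      have h1 : w c * ((w c) ^ 2 - 1) < 0 :=
        mul_neg_of_neg_of_pos hwc (by nlinarith)
      have := div_neg_of_neg_of_pos h1 (pow_pos hRc 2)
      linarith
    obtain ⟨x, hxmem, hxgt⟩ := aux_not_max ρ₀ (fun x => -(w x)) (fun x => -(w' x))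
      c hcIoo hwcont.neg (fun ρ' hρ' => (hw' ρ' hρ').neg)
      (-(w'' c)) (by linarith) (hw'' c hcIoo).neg (by simpa using hw'c)
    have := hminw x ⟨hxmem.1.le, hxmem.2.le⟩
    simp only [neg_lt_neg_iff] at hxgt
    linarith
  · rw [hwc] at hM; simp at hM; linarith
  · -- w c > 1 : interior maximum of w
    have habs : |w c| = w c := abs_of_pos hwc
    have hwc1 : 1 < w c := by rwa [habs] at hM
    have hmaxw : ∀ x ∈ Icc 0 ρ₀, w x ≤ w c := by
      intro x hx
      have h := hcmax hx
      simp only [mem_setOf_eq] at h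
      rw [habs] at h
      exact le_trans (le_abs_self _) h
    have hmaxon : IsMaxOn w (Icc 0 ρ₀) c := fun x hx => hmaxw x hx
    have hloc : IsLocalMax w c :=
      hmaxon.isLocalMax (Icc_mem_nhds hcIoo.1 hcIoo.2)
    have hw'c : w' c = 0 := hloc.hasDerivAt_eq_zero (hw' c hcIoo)
    have hw''pos : 0 < w'' c := by
      rw [heq c hcIoo, hw'c]
      have h1 : 0 < w c * ((w c) ^ 2 - 1) :=
        mul_pos (by linarith) (by nlinarith)
      have := div_pos h1 (pow_pos hRc 2)
      linarith
    obtain ⟨x, hxmem, hxgt⟩ := aux_not_max ρ₀ w w' c hcIoo hwcont hw'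
      (w'' c) hw''pos (hw'' c hcIoo) hw'c
    have := hmaxw x ⟨hxmem.1.le, hxmem.2.le⟩
    linarith
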